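/- In the polynomial ring ℝ[x, y, z, k, l, m], let I be the ideal generated by the nine elements xy, yz, zx, xk, yl, zm, k−x, l−y, m−z. Then the quotient ring ℝ[x, y, z, k, l, m]/I is a finite-dimensional real vector space of dimension 4. -/

import Mathlib

open MvPolynomial

namespace Stmt15Aux

noncomputable section

abbrev R6 := MvPolynomial (Fin 6) ℝ
abbrev R3 := MvPolynomial (Fin 3) ℝ

def Iid : Ideal R6 := Ideal.span
      ({X 0 * X 1, X 1 * X 2, X 2 * X 0,
        X 0 * X 3, X 1 * X 4, X 2 * X 5,
        X 3 - X 0, X 4 - X 1, X 5 - X 2} : Set R6)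

/-- substitution k ↦ x, l ↦ y, m ↦ z -/
def σ : R6 →ₐ[ℝ] R3 := aeval ![X 0, X 1, X 2, X 0, X 1, X 2]

lemma σ0 : σ (X 0) = X 0 := by rw [σ, aeval_X]; rfl
lemma σ1 : σ (X 1) = X 1 := by rw [σ, aeval_X]; rfl
lemma σ2 : σ (X 2) = X 2 := by rw [σ, aeval_X]; rfl
lemma σ3 : σ (X 3) = X 0 := by rw [σ, aeval_X]; rfl
lemma σ4 : σ (X 4) = X 1 := by rw [σ, aeval_X]; rfl
lemma σ5 : σ (X 5) = X 2 := by rw [σ, aeval_X]; rfl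

def degs (d : Fin 3 →₀ ℕ) : ℕ := d.sum fun _ n => n

lemma degs_add (u v : Fin 3 →₀ ℕ) : degs (u + v) = degs u + degs v := by
  unfold degs
  exact Finsupp.sum_add_index' (fun _ => rfl) (fun _ _ _ => rfl)

lemma degs_single (i : Fin 3) (n : ℕ) : degs (Finsupp.single i n) = n := by
  unfold degs
  exact Finsupp.sum_single_index rfl

/-- The ideal of polynomials in 3 variables all of whose monomials have degree ≥ 2. -/
def K : Ideal R3 where
  carrier := {q | ∀ d : Fin 3 →₀ ℕ, degs d < 2 → coeff d q = 0}
  zero_mem' := by intro d _; simp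
  add_mem' := by
    intro a b ha hb d hd
    simp [coeff_add, ha d hd, hb d hd]
  smul_mem' := by
    intro c q hq d hd
    rw [smul_eq_mul, coeff_mul]
    apply Finset.sum_eq_zero
    intro x hx
    rw [Finset.HasAntidiagonal.mem_antidiagonal] at hx
    have hv : degs x.2 < 2 := by
      have := degs_add x.1 x.2
      rw [hx] at this
      omega
    rw [hq x.2 hv, mul_zero]

lemma XX_mem_K (a b : Fin 3) : (X a * X b : R3) ∈ K := by
  intro d hd
  rw [X, X, monomial_mul, coeff_monomial]
  rw [if_neg]
  intro h
  rw [← h, degs_add, degs_single, degs_single] at hd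
  omega

lemma I_le_comap : Iid ≤ Ideal.comap (σ : R6 →+* R3) K := by
  rw [Iid, Ideal.span_le]
  intro p hp
  simp only [Set.mem_insert_iff, Set.mem_singleton_iff] at hp
  rcases hp with h | h | h | h | h | h | h | h | h <;> subst h <;>
    refine Set.mem_of_eq_of_mem rfl ?_ <;>
    rw [SetLike.mem_coe, Ideal.mem_comap] <;>
    simp only [AlgHom.coe_toRingHom, map_mul, map_sub, σ0, σ1, σ2, σ3, σ4, σ5] <;>
    first
      | exact XX_mem_K _ _
      | (rw [sub_self]; exact K.zero_mem)

lemma mem_I_of_gen (p : R6)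
    (hp : p ∈ ({X 0 * X 1, X 1 * X 2, X 2 * X 0,
        X 0 * X 3, X 1 * X 4, X 2 * X 5,
        X 3 - X 0, X 4 - X 1, X 5 - X 2} : Set R6)) : p ∈ Iid :=
  Ideal.subset_span hp

lemma prod_mem : ∀ i j : Fin 6, (i = 0 ∨ i = 1 ∨ i = 2) → (j = 0 ∨ j = 1 ∨ j = 2) →
    (X i * X j : R6) ∈ Iid := by
  have h01 : (X 0 * X 1 : R6) ∈ Iid := mem_I_of_gen _ (by simp)
  have h12 : (X 1 * X 2 : R6) ∈ Iid := mem_I_of_gen _ (by simp)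
  have h20 : (X 2 * X 0 : R6) ∈ Iid := mem_I_of_gen _ (by simp)
  have h03 : (X 0 * X 3 : R6) ∈ Iid := mem_I_of_gen _ (by simp)
  have h14 : (X 1 * X 4 : R6) ∈ Iid := mem_I_of_gen _ (by simp)
  have h25 : (X 2 * X 5 : R6) ∈ Iid := mem_I_of_gen _ (by simp)
  have h30 : (X 3 - X 0 : R6) ∈ Iid := mem_I_of_gen _ (by simp)
  have h41 : (X 4 - X 1 : R6) ∈ Iid := mem_I_of_gen _ (by simp)
  have h52 : (X 5 - X 2 : R6) ∈ Iid := mem_I_of_gen _ (by simp)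
  have h00 : (X 0 * X 0 : R6) ∈ Iid := by
    have : (X 0 * X 0 : R6) = X 0 * X 3 - X 0 * (X 3 - X 0) := by ring
    rw [this]
    exact Iid.sub_mem h03 (Iid.mul_mem_left _ h30)
  have h11 : (X 1 * X 1 : R6) ∈ Iid := by
    have : (X 1 * X 1 : R6) = X 1 * X 4 - X 1 * (X 4 - X 1) := by ring
    rw [this]
    exact Iid.sub_mem h14 (Iid.mul_mem_left _ h41)
  have h22 : (X 2 * X 2 : R6) ∈ Iid := by
    have : (X 2 * X 2 : R6) = X 2 * X 5 - X 2 * (X 5 - X 2) := by ring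
    rw [this]
    exact Iid.sub_mem h25 (Iid.mul_mem_left _ h52)
  rintro i j (rfl | rfl | rfl) (rfl | rfl | rfl) <;>
    first
      | exact h00 | exact h01 | exact h12 | exact h20
      | exact h11 | exact h22
      | (rw [mul_comm]; first | exact h01 | exact h12 | exact h20)

def mk : R6 →ₐ[ℝ] (R6 ⧸ Iid) := Ideal.Quotient.mkₐ ℝ Iid

def S : Submodule ℝ (R6 ⧸ Iid) :=
  Submodule.span ℝ ({1, mk (X 0), mk (X 1), mk (X 2)} : Set (R6 ⧸ Iid))

lemma mk_eq_zero {p : R6} (hp : p ∈ Iid) : mk p = 0 := by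
  rw [mk, Ideal.Quotient.mkₐ_eq_mk, Ideal.Quotient.eq_zero_iff_mem]
  exact hp

lemma prod_zero (i j : Fin 6) (hi : i = 0 ∨ i = 1 ∨ i = 2)
    (hj : j = 0 ∨ j = 1 ∨ j = 2) : mk (X i) * mk (X j) = 0 := by
  rw [← map_mul]
  exact mk_eq_zero (prod_mem i j hi hj)

lemma mul_mem_S {q : R6 ⧸ Iid} (hq : q ∈ S) (j : Fin 6)
    (hj : j = 0 ∨ j = 1 ∨ j = 2) : q * mk (X j) ∈ S := by
  induction hq using Submodule.span_induction with
  | mem v hv =>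
      simp only [Set.mem_insert_iff, Set.mem_singleton_iff] at hv
      rcases hv with h | h | h | h <;> subst h
      · rw [one_mul]
        apply Submodule.subset_span
        rcases hj with rfl | rfl | rfl <;> simp
      · rw [prod_zero 0 j (by left; rfl) hj]; exact S.zero_mem
      · rw [prod_zero 1 j (by right; left; rfl) hj]; exact S.zero_mem
      · rw [prod_zero 2 j (by right; right; rfl) hj]; exact S.zero_mem
  | zero => rw [zero_mul]; exact S.zero_mem
  | add a b _ _ ha hb => rw [add_mul]; exact S.add_mem ha hb
  | smul c a _ ha =>
      have h : (c • a) * mk (X j) = c • (a * mk (X j)) := smul_mul_assoc c a (mk (X j))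
      rw [h]
      exact S.smul_mem c ha

lemma mk_sub_eq (i j : Fin 6)
    (h : (X i - X j : R6) ∈ Iid) : mk (X i) = mk (X j) := by
  have : mk (X i) - mk (X j) = 0 := by
    rw [← map_sub]; exact mk_eq_zero h
  exact sub_eq_zero.mp this

lemma mk_mem_S (p : R6) : mk p ∈ S := by
  induction p using MvPolynomial.induction_on with
  | C a =>
      have : (C a : R6) = a • 1 := by rw [smul_eq_C_mul, mul_one]
      rw [this, map_smul, map_one]
      exact S.smul_mem a (Submodule.subset_span (by simp))
  | add p q hp hq => rw [map_add]; exact S.add_mem hp hq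
  | mul_X p n hp =>
      rw [map_mul]
      fin_cases n
      · exact mul_mem_S hp 0 (by left; rfl)
      · exact mul_mem_S hp 1 (by right; left; rfl)
      · exact mul_mem_S hp 2 (by right; right; rfl)
      · show mk p * mk (X 3) ∈ S
        rw [mk_sub_eq 3 0 (mem_I_of_gen _ (by simp))]
        exact mul_mem_S hp 0 (by left; rfl)
      · show mk p * mk (X 4) ∈ S
        rw [mk_sub_eq 4 1 (mem_I_of_gen _ (by simp))]
        exact mul_mem_S hp 1 (by right; left; rfl)
      · show mk p * mk (X 5) ∈ S
        rw [mk_sub_eq 5 2 (mem_I_of_gen _ (by simp))]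
        exact mul_mem_S hp 2 (by right; right; rfl)

lemma S_top : S = ⊤ := by
  rw [eq_top_iff]
  rintro x -
  obtain ⟨p, rfl⟩ := Ideal.Quotient.mkₐ_surjective ℝ Iid x
  exact mk_mem_S p

lemma indep : LinearIndependent ℝ ![(1 : R6 ⧸ Iid), mk (X 0), mk (X 1), mk (X 2)] := by
  rw [Fintype.linearIndependent_iff]
  intro g hg
  rw [Fin.sum_univ_four] at hg
  simp only [Matrix.cons_val_zero, Matrix.cons_val_one, Matrix.head_cons,
    Matrix.cons_val_two, Matrix.tail_cons, Matrix.cons_val_three] at hg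
  have hq : mk (g 0 • 1 + g 1 • X 0 + g 2 • X 1 + g 3 • X 2) = 0 := by
    simpa [map_add, map_smul, map_one] using hg
  rw [mk, Ideal.Quotient.mkₐ_eq_mk, Ideal.Quotient.eq_zero_iff_mem] at hq
  have hK := I_le_comap hq
  rw [Ideal.mem_comap] at hK
  have hσ : (σ : R6 →+* R3) (g 0 • 1 + g 1 • X 0 + g 2 • X 1 + g 3 • X 2)
      = g 0 • 1 + g 1 • X 0 + g 2 • X 1 + g 3 • X 2 := by
    simp only [AlgHom.coe_toRingHom, map_add]
    rw [map_smul, map_smul, map_smul, map_smul, map_one, σ0, σ1, σ2]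
  rw [hσ] at hK
  have h0 : g 0 = 0 := by
    have := hK 0 (by simp [degs])
    simpa [coeff_smul, coeff_zero_X, coeff_zero_one] using this
  have h1 : g 1 = 0 := by
    have := hK (Finsupp.single 0 1) (by rw [degs_single]; omega)
    simpa [coeff_smul, coeff_X', coeff_one, Finsupp.single_eq_single_iff,
      Finsupp.single_eq_zero, eq_comm] using this
  have h2 : g 2 = 0 := by
    have := hK (Finsupp.single 1 1) (by rw [degs_single]; omega)
    simpa [coeff_smul, coeff_X', coeff_one, Finsupp.single_eq_single_iff,
      Finsupp.single_eq_zero, eq_comm] using this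
  have h3 : g 3 = 0 := by
    have := hK (Finsupp.single 2 1) (by rw [degs_single]; omega)
    simpa [coeff_smul, coeff_X', coeff_one, Finsupp.single_eq_single_iff,
      Finsupp.single_eq_zero, eq_comm] using this
  intro i
  fin_cases i
  · exact h0
  · exact h1
  · exact h2
  · exact h3

def basisA : Module.Basis (Fin 4) ℝ (R6 ⧸ Iid) := Module.Basis.mk indep (by
  have hsub : ({1, mk (X 0), mk (X 1), mk (X 2)} : Set (R6 ⧸ Iid)) ⊆
      Set.range ![(1 : R6 ⧸ Iid), mk (X 0), mk (X 1), mk (X 2)] := by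
    intro v hv
    simp only [Set.mem_insert_iff, Set.mem_singleton_iff] at hv
    rcases hv with rfl | rfl | rfl | rfl
    exacts [⟨0, rfl⟩, ⟨1, rfl⟩, ⟨2, rfl⟩, ⟨3, rfl⟩]
  calc (⊤ : Submodule ℝ (R6 ⧸ Iid)) = S := S_top.symm
    _ ≤ _ := Submodule.span_mono hsub)

theorem main : FiniteDimensional ℝ (R6 ⧸ Iid) ∧ Module.finrank ℝ (R6 ⧸ Iid) = 4 :=
  ⟨Module.Finite.of_basis basisA,
    by rw [Module.finrank_eq_card_basis basisA, Fintype.card_fin]⟩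

end

end Stmt15Aux

/-- In `ℝ[x,y,z,k,l,m]` (variables `X 0, …, X 5`), the quotient by
the ideal `⟨xy, yz, zx, xk, yl, zm, k−x, l−y, m−z⟩` is a real vector space of
dimension 4. -/
theorem stmt_15 :
    letI R := MvPolynomial (Fin 6) ℝ
    letI I : Ideal R := Ideal.span
      ({X 0 * X 1, X 1 * X 2, X 2 * X 0,
        X 0 * X 3, X 1 * X 4, X 2 * X 5,
        X 3 - X 0, X 4 - X 1, X 5 - X 2} : Set R)
    FiniteDimensional ℝ (R ⧸ I) ∧ Module.finrank ℝ (R ⧸ I) = 4 := by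
  exact Stmt15Aux.main
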